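/- arXiv:1502.02997 — 3 statements merged into one kernel-verified Lean document; each statement's English description precedes it below -/
import Mathlib

section
/- The scaling mean, as a function from the set of m × n matrices with nonnegative real entries to [0,∞), is concave and continuous. -/
open scoped BigOperators Kronecker
open Matrix

/-- The permanent of a square real matrix. -/
noncomputable def perm {ι : Type*} [Fintype ι] [DecidableEq ι] (A : Matrix ι ι ℝ) : ℝ :=
  ∑ σ : Equiv.Perm ι, ∏ i, A i (σ i)

/-- The permanental mean `pm A = (per A / n!) ^ (1/n)`. -/
noncomputable def pm {ι : Type*} [Fintype ι] [DecidableEq ι] (A : Matrix ι ι ℝ) : ℝ :=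
  (perm A / (Nat.factorial (Fintype.card ι) : ℝ)) ^ ((Fintype.card ι : ℝ)⁻¹)

/-- The geometric mean of the entries of a vector. -/
noncomputable def gmVec {ι : Type*} [Fintype ι] (v : ι → ℝ) : ℝ :=
  (∏ i, v i) ^ ((Fintype.card ι : ℝ)⁻¹)

/-- The set of values whose infimum defines the scaling mean. -/
noncomputable def smSet {ι κ : Type*} [Fintype ι] [Fintype κ] (A : Matrix ι κ ℝ) : Set ℝ :=
  {r : ℝ | ∃ x : ι → ℝ, ∃ y : κ → ℝ, (∀ i, 0 < x i) ∧ (∀ j, 0 < y j) ∧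
    r = (∑ i, ∑ j, x i * A i j * y j) / (gmVec x * gmVec y)}

/-- The scaling mean `sm A = (1/(mn)) · inf over positive vectors x, y of xᵀAy/(gm x · gm y)`. -/
noncomputable def sm {ι κ : Type*} [Fintype ι] [Fintype κ] (A : Matrix ι κ ℝ) : ℝ :=
  ((Fintype.card ι : ℝ) * (Fintype.card κ : ℝ))⁻¹ * sInf (smSet A)

open scoped Pointwise
open Filter

section aux
variable {ι κ : Type*} [Fintype ι] [Fintype κ]

lemma gmVec_pos {x : ι → ℝ} (hx : ∀ i, 0 < x i) : 0 < gmVec x :=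
  Real.rpow_pos_of_pos (Finset.prod_pos fun i _ => hx i) _

lemma smSet_nonempty (A : Matrix ι κ ℝ) : (smSet A).Nonempty :=
  ⟨_, fun _ => 1, fun _ => 1, fun _ => one_pos, fun _ => one_pos, rfl⟩

lemma smSet_nonneg {A : Matrix ι κ ℝ} (hA : ∀ i j, 0 ≤ A i j) {r : ℝ} (hr : r ∈ smSet A) :
    0 ≤ r := by
  obtain ⟨x, y, hx, hy, rfl⟩ := hr
  apply div_nonneg
  · exact Finset.sum_nonneg fun i _ => Finset.sum_nonneg fun j _ =>
      mul_nonneg (mul_nonneg (hx i).le (hA i j)) (hy j).le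
  · exact (mul_pos (gmVec_pos hx) (gmVec_pos hy)).le

lemma smSet_bddBelow {A : Matrix ι κ ℝ} (hA : ∀ i j, 0 ≤ A i j) : BddBelow (smSet A) :=
  ⟨0, fun _ hr => smSet_nonneg hA hr⟩

lemma sInf_smSet_nonneg {A : Matrix ι κ ℝ} (hA : ∀ i j, 0 ≤ A i j) : 0 ≤ sInf (smSet A) :=
  le_csInf (smSet_nonempty A) fun _ hr => smSet_nonneg hA hr

lemma sInf_smSet_mono {A B : Matrix ι κ ℝ} (hA : ∀ i j, 0 ≤ A i j)
    (hAB : ∀ i j, A i j ≤ B i j) : sInf (smSet A) ≤ sInf (smSet B) := by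
  refine le_csInf (smSet_nonempty B) fun r hr => ?_
  obtain ⟨x, y, hx, hy, rfl⟩ := hr
  refine le_trans (csInf_le (smSet_bddBelow hA) ⟨x, y, hx, hy, rfl⟩) ?_
  gcongr <;> first
    | exact (mul_pos (gmVec_pos hx) (gmVec_pos hy)).le
    | exact mul_pos (gmVec_pos hx) (gmVec_pos hy)
    | exact (hx _).le
    | exact (hy _).le
    | exact hAB _ _

lemma smSet_smul (t : ℝ) (A : Matrix ι κ ℝ) : smSet (t • A) = t • smSet A := by
  ext r
  have hnum : ∀ (x : ι → ℝ) (y : κ → ℝ),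
      (∑ i, ∑ j, x i * (t • A) i j * y j) = t * ∑ i, ∑ j, x i * A i j * y j := by
    intro x y
    simp only [Matrix.smul_apply, smul_eq_mul, Finset.mul_sum]
    exact Finset.sum_congr rfl fun i _ => Finset.sum_congr rfl fun j _ => by ring
  constructor
  · rintro ⟨x, y, hx, hy, rfl⟩
    exact ⟨_, ⟨x, y, hx, hy, rfl⟩, by simp only [smul_eq_mul]; rw [hnum x y, mul_div_assoc]⟩
  · rintro ⟨r', ⟨x, y, hx, hy, rfl⟩, rfl⟩
    exact ⟨x, y, hx, hy, by simp only [smul_eq_mul]; rw [hnum x y, mul_div_assoc]⟩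

lemma sInf_smSet_smul {t : ℝ} (ht : 0 ≤ t) (A : Matrix ι κ ℝ) :
    sInf (smSet (t • A)) = t * sInf (smSet A) := by
  rw [smSet_smul, Real.sInf_smul_of_nonneg ht, smul_eq_mul]

end aux

/-- The scaling mean is a concave and continuous function on the set of
nonnegative `m × n` matrices. -/
theorem stmt_5 (m n : ℕ) :
    ConcaveOn ℝ {A : Matrix (Fin m) (Fin n) ℝ | ∀ i j, 0 ≤ A i j} sm ∧
    ContinuousOn sm {A : Matrix (Fin m) (Fin n) ℝ | ∀ i j, 0 ≤ A i j} := by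
  set s : Set (Matrix (Fin m) (Fin n) ℝ) := {A | ∀ i j, 0 ≤ A i j} with hs
  set c : ℝ := ((Fintype.card (Fin m) : ℝ) * (Fintype.card (Fin n) : ℝ))⁻¹ with hcdef
  have hc : 0 ≤ c := by positivity
  have hsm : ∀ A : Matrix (Fin m) (Fin n) ℝ, sm A = c * sInf (smSet A) := fun _ => rfl
  have hconv : Convex ℝ s := by
    intro A hA B hB a b ha hb hab i j
    have h1 := hA i j
    have h2 := hB i j
    simp only [Matrix.add_apply, Matrix.smul_apply, smul_eq_mul]
    nlinarith
  constructor
  · refine ⟨hconv, ?_⟩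
    intro A hA B hB a b ha hb hab
    simp only [smul_eq_mul, hsm]
    have key : a * sInf (smSet A) + b * sInf (smSet B) ≤ sInf (smSet (a • A + b • B)) := by
      refine le_csInf (smSet_nonempty _) fun r hr => ?_
      obtain ⟨x, y, hx, hy, rfl⟩ := hr
      have hsplit : (∑ i, ∑ j, x i * (a • A + b • B) i j * y j) / (gmVec x * gmVec y)
          = a * ((∑ i, ∑ j, x i * A i j * y j) / (gmVec x * gmVec y))
            + b * ((∑ i, ∑ j, x i * B i j * y j) / (gmVec x * gmVec y)) := by
        rw [← mul_div_assoc, ← mul_div_assoc, ← add_div]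
        congr 1
        simp only [Matrix.add_apply, Matrix.smul_apply, smul_eq_mul, Finset.mul_sum,
          ← Finset.sum_add_distrib]
        exact Finset.sum_congr rfl fun i _ =>
          Finset.sum_congr rfl fun j _ => by ring
      rw [hsplit]
      exact add_le_add
        (mul_le_mul_of_nonneg_left (csInf_le (smSet_bddBelow hA) ⟨x, y, hx, hy, rfl⟩) ha)
        (mul_le_mul_of_nonneg_left (csInf_le (smSet_bddBelow hB) ⟨x, y, hx, hy, rfl⟩) hb)
    calc a * (c * sInf (smSet A)) + b * (c * sInf (smSet B))
        = c * (a * sInf (smSet A) + b * sInf (smSet B)) := by ring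
      _ ≤ c * sInf (smSet (a • A + b • B)) := mul_le_mul_of_nonneg_left key hc
  · intro A₀ hA₀
    have hI : ContinuousWithinAt (fun A : Matrix (Fin m) (Fin n) ℝ => sInf (smSet A)) s A₀ := by
      unfold ContinuousWithinAt
      rw [Metric.tendsto_nhds]
      intro ε hε
      have hne := smSet_nonempty A₀
      have hbdd := smSet_bddBelow hA₀
      -- upper bound
      obtain ⟨r, hrmem, hrlt⟩ : ∃ r ∈ smSet A₀, r < sInf (smSet A₀) + ε :=
        (csInf_lt_iff hbdd hne).mp (by linarith)
      obtain ⟨x, y, hx, hy, hr⟩ := hrmem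
      set F : Matrix (Fin m) (Fin n) ℝ → ℝ :=
        fun B => (∑ i, ∑ j, x i * B i j * y j) / (gmVec x * gmVec y) with hF
      have hFcont : Continuous F := by
        apply Continuous.div_const
        refine continuous_finset_sum _ fun i _ => continuous_finset_sum _ fun j _ => ?_
        exact (continuous_const.mul (continuous_id.matrix_elem i j)).mul continuous_const
      have hFA₀ : F A₀ < sInf (smSet A₀) + ε := by rw [hF]; rw [hr] at hrlt; exact hrlt
      have hopen : ∀ᶠ B in nhds A₀, F B < sInf (smSet A₀) + ε :=
        (isOpen_lt hFcont continuous_const).eventually_mem hFA₀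
      have hupper : ∀ᶠ B in nhdsWithin A₀ s, sInf (smSet B) < sInf (smSet A₀) + ε := by
        filter_upwards [nhdsWithin_le_nhds hopen, self_mem_nhdsWithin] with B hB hBs
        exact lt_of_le_of_lt (csInf_le (smSet_bddBelow hBs) ⟨x, y, hx, hy, rfl⟩) hB
      -- lower bound
      have hlower : ∀ᶠ B in nhdsWithin A₀ s, sInf (smSet A₀) - ε < sInf (smSet B) := by
        by_cases h0 : ∀ i j, A₀ i j = 0
        · have hA0 : sInf (smSet A₀) = 0 := by
            have hA₀eq : A₀ = (0 : ℝ) • A₀ := by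
              ext i j; simp [h0 i j]
            rw [hA₀eq, sInf_smSet_smul le_rfl, zero_mul]
          filter_upwards [self_mem_nhdsWithin] with B hBs
          rw [hA0]
          linarith [sInf_smSet_nonneg hBs]
        · push_neg at h0
          obtain ⟨i₀, j₀, hij₀⟩ := h0
          set T : Finset (Fin m × Fin n) :=
            Finset.univ.filter (fun p => 0 < A₀ p.1 p.2) with hT
          have hTne : T.Nonempty :=
            ⟨(i₀, j₀), by simp [hT, lt_of_le_of_ne (hA₀ i₀ j₀) (Ne.symm hij₀)]⟩
          set a := T.inf' hTne (fun p => A₀ p.1 p.2) with hadef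
          have ha : 0 < a := by
            rw [hadef, Finset.lt_inf'_iff]
            intro p hp
            exact (Finset.mem_filter.mp hp).2
          have hI0 := sInf_smSet_nonneg hA₀
          set δ : ℝ := min 1 (ε / (sInf (smSet A₀) + 1)) with hδdef
          have hδpos : 0 < δ := lt_min one_pos (div_pos hε (by linarith))
          have hδ1 : δ ≤ 1 := min_le_left _ _
          have hclose : ∀ᶠ B in nhds A₀, ∀ i j, dist (B i j) (A₀ i j) < δ * a := by
            rw [eventually_all]
            intro i
            rw [eventually_all]
            intro j
            have htd : Tendsto (fun B : Matrix (Fin m) (Fin n) ℝ => B i j) (nhds A₀)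
                (nhds (A₀ i j)) :=
              ((continuous_id.matrix_elem i j).tendsto A₀)
            exact Metric.tendsto_nhds.mp htd _ (mul_pos hδpos ha)
          filter_upwards [nhdsWithin_le_nhds hclose, self_mem_nhdsWithin] with B hB hBs
          have hle : ∀ i j, ((1 - δ) • A₀) i j ≤ B i j := by
            intro i j
            have h1 : |B i j - A₀ i j| < δ * a := by rw [← Real.dist_eq]; exact hB i j
            have h2 := abs_lt.mp h1
            simp only [Matrix.smul_apply, smul_eq_mul]
            rcases eq_or_lt_of_le (hA₀ i j) with h | h
            · have := hBs i j
              nlinarith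
            · have hmem : (i, j) ∈ T := Finset.mem_filter.mpr ⟨Finset.mem_univ _, h⟩
              have haij : a ≤ A₀ i j := Finset.inf'_le (fun p => A₀ p.1 p.2) hmem
              nlinarith
          have hmono := sInf_smSet_mono
            (A := (1 - δ) • A₀)
            (fun i j => by
              simp only [Matrix.smul_apply, smul_eq_mul]
              exact mul_nonneg (by linarith) (hA₀ i j)) hle
          rw [sInf_smSet_smul (by linarith : (0:ℝ) ≤ 1 - δ)] at hmono
          have hδI : δ * sInf (smSet A₀) < ε := by
            have h2 : δ ≤ ε / (sInf (smSet A₀) + 1) := min_le_right _ _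
            rw [le_div_iff₀ (by linarith)] at h2
            nlinarith
          nlinarith
      filter_upwards [hupper, hlower] with B h1 h2
      rw [Real.dist_eq, abs_lt]
      constructor <;> linarith
    have : ContinuousWithinAt (fun A : Matrix (Fin m) (Fin n) ℝ => c * sInf (smSet A)) s A₀ :=
      hI.const_mul c
    exact this
end

section
/- Suppose an n × n matrix A with nonnegative real entries has a Sinkhorn decomposition A = D S E, where S is doubly stochastic and D, E are diagonal matrices with strictly positive diagonal entries. Then sm(A) = (1/n)·gm(D)·gm(E) = (1/n)·pm(A)/pm(S), where gm(D) denotes the geometric mean of the diagonal entries of D. Moreover, the infimum in the definition of sm(A) is attained at the vectors x and y whose entries form the diagonals of D⁻¹ and E⁻¹, respectively. -/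
open scoped BigOperators Kronecker
open Matrix

lemma gmVec_pos_s8 {ι : Type*} [Fintype ι] {v : ι → ℝ} (hv : ∀ i, 0 < v i) : 0 < gmVec v :=
  Real.rpow_pos_of_pos (Finset.prod_pos fun i _ => hv i) _

lemma gmVec_mul {ι : Type*} [Fintype ι] {v w : ι → ℝ} (hv : ∀ i, 0 ≤ v i) (hw : ∀ i, 0 ≤ w i) :
    gmVec (fun i => v i * w i) = gmVec v * gmVec w := by
  unfold gmVec
  rw [Finset.prod_mul_distrib, Real.mul_rpow (Finset.prod_nonneg fun i _ => hv i)
    (Finset.prod_nonneg fun i _ => hw i)]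

lemma gmVec_inv {ι : Type*} [Fintype ι] {v : ι → ℝ} (hv : ∀ i, 0 ≤ v i) :
    gmVec (fun i => (v i)⁻¹) = (gmVec v)⁻¹ := by
  unfold gmVec
  have h : ∏ i, (fun i => (v i)⁻¹) i = (∏ i, v i)⁻¹ := by simp
  rw [h, Real.inv_rpow (Finset.prod_nonneg fun i _ => hv i)]

/-- If `A = D S E` is a Sinkhorn decomposition (with `S` doubly stochastic and
`D = diag d`, `E = diag e` having positive diagonals), then
`sm A = (1/n)·gm(D)·gm(E) = (1/n)·pm(A)/pm(S)`, and the infimum defining `sm A`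
is attained at the vectors formed by the diagonals of `D⁻¹` and `E⁻¹`. -/
theorem stmt_8 {n : ℕ} (A S : Matrix (Fin n) (Fin n) ℝ) (d e : Fin n → ℝ)
    (hd : ∀ i, 0 < d i) (he : ∀ i, 0 < e i)
    (hS0 : ∀ i j, 0 ≤ S i j)
    (hrow : ∀ i, ∑ j, S i j = 1) (hcol : ∀ j, ∑ i, S i j = 1)
    (hA : A = Matrix.diagonal d * S * Matrix.diagonal e) :
    sm A = (n : ℝ)⁻¹ * (gmVec d * gmVec e) ∧
    sm A = (n : ℝ)⁻¹ * (pm A / pm S) ∧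
    sInf (smSet A) =
      (∑ i, ∑ j, (d i)⁻¹ * A i j * (e j)⁻¹) /
        (gmVec (fun i => (d i)⁻¹) * gmVec (fun j => (e j)⁻¹)) := by
  rcases Nat.eq_zero_or_pos n with hn | hn
  · subst hn
    have hs : smSet A = {0} := by
      ext r
      simp only [smSet, Set.mem_setOf_eq, Set.mem_singleton_iff]
      constructor
      · rintro ⟨x, y, -, -, rfl⟩; simp
      · rintro rfl
        exact ⟨fun _ => 1, fun _ => 1, fun i => one_pos, fun i => one_pos, by simp⟩
    refine ⟨?_, ?_, ?_⟩ <;> simp [sm, hs]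
  have hn0 : (n : ℝ) ≠ 0 := Nat.cast_ne_zero.2 hn.ne'
  have hAe : ∀ i j, A i j = d i * S i j * e j := by
    intro i j; rw [hA]; simp [Matrix.mul_diagonal, Matrix.diagonal_mul]
  -- the value at x = d⁻¹, y = e⁻¹
  have hsum0 : ∑ i, ∑ j, (d i)⁻¹ * A i j * (e j)⁻¹ = (n : ℝ) := by
    have h1 : ∀ i j, (d i)⁻¹ * A i j * (e j)⁻¹ = S i j := by
      intro i j; rw [hAe]
      have h1 := (hd i).ne'
      have h2 := (he j).ne'
      field_simp
    simp_rw [h1, hrow]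
    simp
  have hgd : 0 < gmVec d := gmVec_pos_s8 hd
  have hge : 0 < gmVec e := gmVec_pos_s8 he
  -- lower bound via AM-GM
  have key : ∀ (x y : Fin n → ℝ), (∀ i, 0 < x i) → (∀ j, 0 < y j) →
      (n : ℝ) * (gmVec d * gmVec e) * (gmVec x * gmVec y) ≤ ∑ i, ∑ j, x i * A i j * y j := by
    intro x y hx hy
    set u : Fin n → ℝ := fun i => x i * d i with hu
    set v : Fin n → ℝ := fun j => y j * e j with hv
    have hupos : ∀ i, 0 < u i := fun i => mul_pos (hx i) (hd i)
    have hvpos : ∀ j, 0 < v j := fun j => mul_pos (hy j) (he j)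
    have hw0 : ∀ p ∈ (Finset.univ : Finset (Fin n × Fin n)), 0 ≤ S p.1 p.2 / n :=
      fun p _ => div_nonneg (hS0 p.1 p.2) (Nat.cast_nonneg n)
    have hw1 : ∑ p : Fin n × Fin n, S p.1 p.2 / (n : ℝ) = 1 := by
      rw [← Finset.sum_div, Fintype.sum_prod_type]
      simp_rw [hrow]
      simp [hn0]
    have hz0 : ∀ p ∈ (Finset.univ : Finset (Fin n × Fin n)), 0 ≤ u p.1 * v p.2 :=
      fun p _ => (mul_pos (hupos p.1) (hvpos p.2)).le
    have amgm := Real.geom_mean_le_arith_mean_weighted Finset.univ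
      (fun p : Fin n × Fin n => S p.1 p.2 / n) (fun p => u p.1 * v p.2) hw0 hw1 hz0
    have hprod : ∏ p : Fin n × Fin n, (u p.1 * v p.2) ^ (S p.1 p.2 / (n : ℝ))
        = gmVec u * gmVec v := by
      rw [Fintype.prod_prod_type]
      have h1 : ∀ i j, (u i * v j) ^ (S i j / (n : ℝ))
          = u i ^ (S i j / (n : ℝ)) * v j ^ (S i j / (n : ℝ)) :=
        fun i j => Real.mul_rpow (hupos i).le (hvpos j).le
      simp_rw [h1, Finset.prod_mul_distrib]
      rw [Finset.prod_comm (f := fun i j => v j ^ (S i j / (n : ℝ)))]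
      have h2 : ∀ i, ∏ j, u i ^ (S i j / (n : ℝ)) = u i ^ ((n : ℝ))⁻¹ := by
        intro i
        rw [← Real.rpow_sum_of_pos (hupos i), ← Finset.sum_div, hrow, one_div]
      have h3 : ∀ j, ∏ i, v j ^ (S i j / (n : ℝ)) = v j ^ ((n : ℝ))⁻¹ := by
        intro j
        rw [← Real.rpow_sum_of_pos (hvpos j), ← Finset.sum_div, hcol, one_div]
      simp_rw [h2, h3]
      rw [Real.finset_prod_rpow _ _ (fun i _ => (hupos i).le),
        Real.finset_prod_rpow _ _ (fun j _ => (hvpos j).le)]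
      simp [gmVec]
    have hsum : ∑ p : Fin n × Fin n, S p.1 p.2 / (n : ℝ) * (u p.1 * v p.2)
        = (n : ℝ)⁻¹ * ∑ i, ∑ j, x i * A i j * y j := by
      rw [Fintype.sum_prod_type, Finset.mul_sum]
      refine Finset.sum_congr rfl fun i _ => ?_
      rw [Finset.mul_sum]
      refine Finset.sum_congr rfl fun j _ => ?_
      rw [hAe]
      field_simp [hu, hv]
      ring
    rw [hprod, hsum] at amgm
    have hgu : gmVec u = gmVec x * gmVec d := gmVec_mul (fun i => (hx i).le) (fun i => (hd i).le)
    have hgv : gmVec v = gmVec y * gmVec e := gmVec_mul (fun j => (hy j).le) (fun j => (he j).le)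
    rw [hgu, hgv] at amgm
    have := mul_le_mul_of_nonneg_left amgm (Nat.cast_nonneg n : (0:ℝ) ≤ n)
    rw [show (n:ℝ) * ((n:ℝ)⁻¹ * ∑ i, ∑ j, x i * A i j * y j)
        = ∑ i, ∑ j, x i * A i j * y j by field_simp] at this
    calc (n : ℝ) * (gmVec d * gmVec e) * (gmVec x * gmVec y)
        = (n : ℝ) * (gmVec x * gmVec d * (gmVec y * gmVec e)) := by ring
      _ ≤ ∑ i, ∑ j, x i * A i j * y j := this
  have hlb : ∀ r ∈ smSet A, (n : ℝ) * (gmVec d * gmVec e) ≤ r := by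
    rintro r ⟨x, y, hx, hy, rfl⟩
    rw [le_div_iff₀ (mul_pos (gmVec_pos_s8 hx) (gmVec_pos_s8 hy))]
    exact key x y hx hy
  have hmem : (n : ℝ) * (gmVec d * gmVec e) ∈ smSet A := by
    refine ⟨fun i => (d i)⁻¹, fun j => (e j)⁻¹, fun i => inv_pos.2 (hd i),
      fun j => inv_pos.2 (he j), ?_⟩
    rw [hsum0, gmVec_inv (fun i => (hd i).le), gmVec_inv (fun j => (he j).le)]
    field_simp
  have hinf : sInf (smSet A) = (n : ℝ) * (gmVec d * gmVec e) :=
    IsLeast.csInf_eq ⟨hmem, hlb⟩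
  -- permanent computations
  have hpermA : perm A = (∏ i, d i) * (∏ i, e i) * perm S := by
    unfold perm
    rw [Finset.mul_sum]
    refine Finset.sum_congr rfl fun σ _ => ?_
    calc ∏ i, A i (σ i) = ∏ i, d i * S i (σ i) * e (σ i) :=
          Finset.prod_congr rfl fun i _ => hAe i (σ i)
      _ = (∏ i, d i) * (∏ i, S i (σ i)) * ∏ i, e (σ i) := by
          rw [Finset.prod_mul_distrib, Finset.prod_mul_distrib]
      _ = (∏ i, d i) * (∏ i, e i) * ∏ i, S i (σ i) := by
          rw [Equiv.prod_comp σ e]; ring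
  have hSds : S ∈ doublyStochastic ℝ (Fin n) :=
    mem_doublyStochastic_iff_sum.2 ⟨hS0, hrow, hcol⟩
  obtain ⟨w, hw0, hw1, hwS⟩ := exists_eq_sum_perm_of_mem_doublyStochastic hSds
  obtain ⟨σ, hσ⟩ : ∃ σ, 0 < w σ := by
    by_contra h
    push_neg at h
    have : ∑ σ, w σ ≤ 0 := Finset.sum_nonpos fun σ _ => h σ
    linarith [hw1]
  have hPMnn : ∀ (τ : Equiv.Perm (Fin n)) i j, (0:ℝ) ≤ (τ.permMatrix ℝ) i j := by
    intro τ i j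
    simp only [Equiv.Perm.permMatrix, PEquiv.toMatrix_apply]
    split <;> norm_num
  have hSentry : ∀ i, w σ ≤ S i (σ i) := by
    intro i
    rw [← hwS]
    have h1 : (∑ τ : Equiv.Perm (Fin n), w τ • τ.permMatrix ℝ) i (σ i)
        = ∑ τ : Equiv.Perm (Fin n), w τ * (τ.permMatrix ℝ) i (σ i) := by
      simp [Matrix.sum_apply]
    rw [h1]
    have hterm : w σ * (σ.permMatrix ℝ) i (σ i) = w σ := by
      simp [Equiv.Perm.permMatrix, PEquiv.toMatrix_apply, Equiv.toPEquiv_apply]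
    calc w σ = w σ * (σ.permMatrix ℝ) i (σ i) := hterm.symm
      _ ≤ ∑ τ : Equiv.Perm (Fin n), w τ * (τ.permMatrix ℝ) i (σ i) :=
          Finset.single_le_sum (fun τ _ => mul_nonneg (hw0 τ) (hPMnn τ i (σ i)))
            (Finset.mem_univ σ)
  have hpermS : 0 < perm S := by
    have h1 : 0 < ∏ i, S i (σ i) :=
      Finset.prod_pos fun i _ => lt_of_lt_of_le hσ (hSentry i)
    have h2 : ∏ i, S i (σ i) ≤ ∑ τ : Equiv.Perm (Fin n), ∏ i, S i (τ i) :=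
      Finset.single_le_sum (fun τ _ => Finset.prod_nonneg fun i _ => hS0 i (τ i))
        (Finset.mem_univ σ)
    exact lt_of_lt_of_le h1 h2
  have hfac : (0:ℝ) < (Nat.factorial n : ℝ) := Nat.cast_pos.2 (Nat.factorial_pos n)
  have hd' : (0:ℝ) ≤ ∏ i, d i := (Finset.prod_pos fun i _ => hd i).le
  have he' : (0:ℝ) ≤ ∏ i, e i := (Finset.prod_pos fun i _ => he i).le
  have hpmS : 0 < pm S := by
    unfold pm
    rw [Fintype.card_fin]
    exact Real.rpow_pos_of_pos (div_pos hpermS hfac) _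
  have hpmA : pm A = gmVec d * gmVec e * pm S := by
    unfold pm gmVec
    rw [Fintype.card_fin, hpermA]
    rw [show (∏ i, d i) * (∏ i, e i) * perm S / (Nat.factorial n : ℝ)
        = (∏ i, d i) * ((∏ i, e i) * (perm S / (Nat.factorial n : ℝ))) by ring]
    rw [Real.mul_rpow hd' (mul_nonneg he' (div_nonneg hpermS.le hfac.le)),
      Real.mul_rpow he' (div_nonneg hpermS.le hfac.le)]
    ring
  refine ⟨?_, ?_, ?_⟩
  · unfold sm
    rw [Fintype.card_fin, hinf]
    field_simp
  · unfold sm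
    rw [Fintype.card_fin, hinf, hpmA, mul_div_assoc, div_self hpmS.ne', mul_one]
    field_simp
  · rw [hinf, hsum0, gmVec_inv (fun i => (hd i).le), gmVec_inv (fun j => (he j).le)]
    field_simp
end

section
/- Let λ > 1 and let A = (a_{ij}) and B = (b_{ij}) be n × n matrices all of whose entries lie in [λ⁻¹, λ]. Then |log(per(B)/per(A))| ≤ λ⁴·n·(∑_{i,j} |b_{ij} − a_{ij}|)/min(∑_{i,j} a_{ij}, ∑_{i,j} b_{ij}) ≤ (λ⁵/n)·∑_{i,j} |b_{ij} − a_{ij}|. -/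
open scoped BigOperators Kronecker
open Matrix

noncomputable def Qm {n : ℕ} (C : Matrix (Fin n) (Fin n) ℝ) (i j : Fin n) : ℝ :=
  ∑ σ ∈ Finset.univ.filter (fun σ : Equiv.Perm (Fin n) => σ i = j),
    ∏ r ∈ Finset.univ.erase i, C r (σ r)

lemma Qm_nonneg {n : ℕ} {C : Matrix (Fin n) (Fin n) ℝ} (hC : ∀ i j, 0 ≤ C i j)
    (i j : Fin n) : 0 ≤ Qm C i j :=
  Finset.sum_nonneg fun σ _ => Finset.prod_nonneg fun r _ => hC r (σ r)

lemma Qm_le_Qm {n : ℕ} {lam : ℝ} (hlam : 1 < lam) {C : Matrix (Fin n) (Fin n) ℝ}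
    (hC : ∀ i j, lam⁻¹ ≤ C i j ∧ C i j ≤ lam) (i j j' : Fin n) :
    Qm C i j ≤ lam ^ 2 * Qm C i j' := by
  have hlam0 : (0:ℝ) < lam := lt_trans one_pos hlam
  have hCpos : ∀ r c, 0 < C r c := fun r c => lt_of_lt_of_le (inv_pos.mpr hlam0) (hC r c).1
  have hCnn : ∀ r c, (0:ℝ) ≤ C r c := fun r c => (hCpos r c).le
  rcases eq_or_ne j j' with rfl | hjj
  · have h1 : (1:ℝ) ≤ lam ^ 2 := by nlinarith
    nlinarith [Qm_nonneg hCnn i j]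
  · set e : Equiv.Perm (Fin n) := Equiv.swap j j' with he
    have hQ' : Qm C i j' = ∑ σ ∈ Finset.univ.filter (fun σ : Equiv.Perm (Fin n) => σ i = j),
        ∏ r ∈ Finset.univ.erase i, C r (e (σ r)) := by
      unfold Qm
      refine (Finset.sum_equiv (Equiv.mulLeft e)
        (fun σ => ?_) (fun σ hσ => ?_)).symm
      · simp only [Finset.mem_filter, Finset.mem_univ, true_and, Equiv.coe_mulLeft,
          Equiv.Perm.mul_apply]
        constructor
        · intro h; rw [h]; exact Equiv.swap_apply_left j j'
        · intro h
          have := congrArg e h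
          rwa [he, Equiv.swap_apply_self, Equiv.swap_apply_right] at this
      · rfl
    rw [hQ', Finset.mul_sum]
    refine Finset.sum_le_sum fun σ hσ => ?_
    have hσi : σ i = j := (Finset.mem_filter.mp hσ).2
    set r0 : Fin n := σ⁻¹ j' with hr0
    have hσr0 : σ r0 = j' := by rw [hr0]; exact σ.apply_symm_apply j'
    have hr0i : r0 ≠ i := by
      intro h; rw [h, hσi] at hσr0; exact hjj hσr0
    have hr0mem : r0 ∈ Finset.univ.erase i := Finset.mem_erase.mpr ⟨hr0i, Finset.mem_univ r0⟩
    rw [← Finset.mul_prod_erase _ _ hr0mem, ← Finset.mul_prod_erase _ (fun r => C r (e (σ r))) hr0mem]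
    have hprodeq : ∏ r ∈ (Finset.univ.erase i).erase r0, C r (σ r)
        = ∏ r ∈ (Finset.univ.erase i).erase r0, C r (e (σ r)) := by
      refine Finset.prod_congr rfl fun r hr => ?_
      have hri : r ≠ i := Finset.mem_erase.mp ((Finset.mem_erase.mp hr).2) |>.1
      have hrr0 : r ≠ r0 := (Finset.mem_erase.mp hr).1
      have h1 : σ r ≠ j := fun h => hri (σ.injective (h.trans hσi.symm))
      have h2 : σ r ≠ j' := fun h => hrr0 (σ.injective (h.trans hσr0.symm))
      rw [he, Equiv.swap_apply_of_ne_of_ne h1 h2]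
    rw [← hprodeq, hσr0, ← mul_assoc]
    have hP : 0 ≤ ∏ r ∈ (Finset.univ.erase i).erase r0, C r (σ r) :=
      Finset.prod_nonneg fun r _ => hCnn r (σ r)
    have her0 : e j' = j := Equiv.swap_apply_right j j'
    rw [her0]
    refine mul_le_mul_of_nonneg_right ?_ hP
    have h1 : C r0 j' ≤ lam := (hC r0 j').2
    have h2 : lam⁻¹ ≤ C r0 j := (hC r0 j).1
    calc C r0 j' ≤ lam := h1
    _ = lam ^ 2 * lam⁻¹ := by field_simp [pow_two]
    _ ≤ lam ^ 2 * C r0 j := by nlinarith [sq_nonneg lam]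

lemma perm_expand {n : ℕ} (C : Matrix (Fin n) (Fin n) ℝ) (i : Fin n) :
    perm C = ∑ j, C i j * Qm C i j := by
  unfold perm Qm
  rw [← Finset.sum_fiberwise Finset.univ (fun σ : Equiv.Perm (Fin n) => σ i)
      (fun σ => ∏ r, C r (σ r))]
  refine Finset.sum_congr rfl fun j _ => ?_
  rw [Finset.mul_sum]
  refine Finset.sum_congr rfl fun σ hσ => ?_
  have hσi : σ i = j := (Finset.mem_filter.mp hσ).2
  rw [← Finset.mul_prod_erase Finset.univ _ (Finset.mem_univ i), hσi]


lemma perm_pos {n : ℕ} {C : Matrix (Fin n) (Fin n) ℝ} (hC : ∀ i j, 0 < C i j) :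
    0 < perm C := by
  unfold perm
  exact Finset.sum_pos (fun σ _ => Finset.prod_pos fun r _ => hC r (σ r)) Finset.univ_nonempty

lemma nQ_le {n : ℕ} {lam : ℝ} (hlam : 1 < lam) {C : Matrix (Fin n) (Fin n) ℝ}
    (hC : ∀ i j, lam⁻¹ ≤ C i j ∧ C i j ≤ lam) (i j : Fin n) :
    (n : ℝ) * Qm C i j ≤ lam ^ 3 * perm C := by
  have hlam0 : (0:ℝ) < lam := lt_trans one_pos hlam
  have hCnn : ∀ r c, (0:ℝ) ≤ C r c := fun r c =>
    le_trans (inv_pos.mpr hlam0).le (hC r c).1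
  have key : ∀ j' : Fin n, lam⁻¹ * (lam⁻¹ * lam⁻¹ * Qm C i j) ≤ C i j' * Qm C i j' := by
    intro j'
    have h1 : Qm C i j ≤ lam ^ 2 * Qm C i j' := Qm_le_Qm hlam hC i j j'
    have h2 : lam⁻¹ ≤ C i j' := (hC i j').1
    have hQ' : 0 ≤ Qm C i j' := Qm_nonneg hCnn i j'
    have h3 : lam⁻¹ * lam⁻¹ * Qm C i j ≤ Qm C i j' := by
      rw [inv_mul_eq_div, div_mul_eq_mul_div, div_le_iff₀ hlam0]
      rw [inv_mul_eq_div, div_le_iff₀ hlam0] at *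
      nlinarith
    calc lam⁻¹ * (lam⁻¹ * lam⁻¹ * Qm C i j) ≤ lam⁻¹ * Qm C i j' := by
          have := inv_pos.mpr hlam0
          nlinarith
      _ ≤ C i j' * Qm C i j' := mul_le_mul_of_nonneg_right h2 hQ'
  have hsum : ∑ j' : Fin n, lam⁻¹ * (lam⁻¹ * lam⁻¹ * Qm C i j) ≤ perm C := by
    rw [perm_expand C i]
    exact Finset.sum_le_sum fun j' _ => key j'
  rw [Finset.sum_const, Finset.card_univ, Fintype.card_fin, nsmul_eq_mul] at hsum
  have hl3 : (0:ℝ) < lam ^ 3 := by positivity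
  calc (n:ℝ) * Qm C i j = lam ^ 3 * ((n:ℝ) * (lam⁻¹ * (lam⁻¹ * lam⁻¹ * Qm C i j))) := by
        field_simp
    _ ≤ lam ^ 3 * perm C := by nlinarith

noncomputable def upd {n : ℕ} (C : Matrix (Fin n) (Fin n) ℝ) (i j : Fin n) (b : ℝ) :
    Matrix (Fin n) (Fin n) ℝ :=
  Matrix.of fun r c => if r = i ∧ c = j then b else C r c

lemma Qm_upd {n : ℕ} (C : Matrix (Fin n) (Fin n) ℝ) (i j : Fin n) (b : ℝ) (j' : Fin n) :
    Qm (upd C i j b) i j' = Qm C i j' := by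
  unfold Qm
  refine Finset.sum_congr rfl fun σ _ => Finset.prod_congr rfl fun r hr => ?_
  have hri : r ≠ i := (Finset.mem_erase.mp hr).1
  simp [upd, hri]

lemma perm_upd {n : ℕ} (C : Matrix (Fin n) (Fin n) ℝ) (i j : Fin n) (b : ℝ) :
    perm (upd C i j b) = perm C + (b - C i j) * Qm C i j := by
  rw [perm_expand (upd C i j b) i, perm_expand C i]
  have h1 : ∀ j', Qm (upd C i j b) i j' = Qm C i j' := Qm_upd C i j b
  have h2 : ∀ j', upd C i j b i j' = if j' = j then b else C i j' := by
    intro j'; simp [upd]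
  simp only [h1, h2]
  rw [← Finset.add_sum_erase _ (fun j' => (if j' = j then b else C i j') * Qm C i j')
      (Finset.mem_univ j),
    ← Finset.add_sum_erase _ (fun j' => C i j' * Qm C i j') (Finset.mem_univ j)]
  have hrest : ∑ j' ∈ Finset.univ.erase j, (if j' = j then b else C i j') * Qm C i j'
      = ∑ j' ∈ Finset.univ.erase j, C i j' * Qm C i j' := by
    refine Finset.sum_congr rfl fun j' hj' => ?_
    rw [if_neg (Finset.mem_erase.mp hj').1]
  rw [hrest, if_pos rfl]
  ring
lemma loghelp {n : ℕ} (hn : 0 < n) {L P P' d Q : ℝ} (hP : 0 < P) (hP' : 0 < P')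
    (hQ : 0 ≤ Q) (hPP : P' = P + d * Q) (hnQ : (n : ℝ) * Q ≤ L * P) :
    Real.log P' - Real.log P ≤ L / n * |d| := by
  have hn' : (0:ℝ) < n := Nat.cast_pos.mpr hn
  rw [← Real.log_div hP'.ne' hP.ne']
  have h1 : Real.log (P' / P) ≤ P' / P - 1 := Real.log_le_sub_one_of_pos (div_pos hP' hP)
  have h2 : P' / P - 1 = d * Q / P := by
    field_simp [hPP]
    linarith
  have h3 : d * Q / P ≤ |d| * (Q / P) := by
    rw [mul_div_assoc]
    exact mul_le_mul_of_nonneg_right (le_abs_self d) (div_nonneg hQ hP.le)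
  have h4 : Q / P ≤ L / n := by
    rw [div_le_div_iff₀ hP hn']
    nlinarith
  calc Real.log (P' / P) ≤ d * Q / P := by rw [← h2]; exact h1
    _ ≤ |d| * (Q / P) := h3
    _ ≤ |d| * (L / n) := mul_le_mul_of_nonneg_left h4 (abs_nonneg d)
    _ = L / n * |d| := by ring

lemma step {n : ℕ} {lam : ℝ} (hlam : 1 < lam) (C : Matrix (Fin n) (Fin n) ℝ)
    (hC : ∀ i j, lam⁻¹ ≤ C i j ∧ C i j ≤ lam) (i j : Fin n) (b : ℝ)
    (hb : lam⁻¹ ≤ b ∧ b ≤ lam) :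
    |Real.log (perm (upd C i j b)) - Real.log (perm C)| ≤ lam ^ 3 / n * |b - C i j| := by
  have hlam0 : (0:ℝ) < lam := lt_trans one_pos hlam
  have hinv : (0:ℝ) < lam⁻¹ := inv_pos.mpr hlam0
  have hn : 0 < n := i.pos
  have hCpos : ∀ r c, 0 < C r c := fun r c => lt_of_lt_of_le hinv (hC r c).1
  have hCnn : ∀ r c, (0:ℝ) ≤ C r c := fun r c => (hCpos r c).le
  have hC' : ∀ r c, lam⁻¹ ≤ upd C i j b r c ∧ upd C i j b r c ≤ lam := by
    intro r c
    by_cases h : r = i ∧ c = j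
    · simpa [upd, h] using hb
    · simpa [upd, h] using hC r c
  have hC'pos : ∀ r c, 0 < upd C i j b r c := fun r c => lt_of_lt_of_le hinv (hC' r c).1
  have hP : 0 < perm C := perm_pos hCpos
  have hP' : 0 < perm (upd C i j b) := perm_pos hC'pos
  have hQ : 0 ≤ Qm C i j := Qm_nonneg hCnn i j
  have hPP : perm (upd C i j b) = perm C + (b - C i j) * Qm C i j := perm_upd C i j b
  have hnQ : (n : ℝ) * Qm C i j ≤ lam ^ 3 * perm C := nQ_le hlam hC i j
  have hnQ' : (n : ℝ) * Qm C i j ≤ lam ^ 3 * perm (upd C i j b) := by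
    have := nQ_le hlam hC' i j
    rwa [Qm_upd] at this
  rw [abs_sub_le_iff]
  constructor
  · exact loghelp hn hP hP' hQ hPP hnQ
  · have hPP2 : perm C = perm (upd C i j b) + (-(b - C i j)) * Qm C i j := by
      rw [hPP]; ring
    have := loghelp hn hP' hP hQ hPP2 hnQ'
    rwa [abs_neg] at this

noncomputable def mix {n : ℕ} (A B : Matrix (Fin n) (Fin n) ℝ)
    (s : Finset (Fin n × Fin n)) : Matrix (Fin n) (Fin n) ℝ :=
  Matrix.of fun i j => if (i, j) ∈ s then B i j else A i j

lemma mix_bounds {n : ℕ} {lam : ℝ} {A B : Matrix (Fin n) (Fin n) ℝ}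
    (hA : ∀ i j, lam⁻¹ ≤ A i j ∧ A i j ≤ lam)
    (hB : ∀ i j, lam⁻¹ ≤ B i j ∧ B i j ≤ lam) (s : Finset (Fin n × Fin n)) :
    ∀ i j, lam⁻¹ ≤ mix A B s i j ∧ mix A B s i j ≤ lam := by
  intro i j
  by_cases h : (i, j) ∈ s
  · simpa [mix, h] using hB i j
  · simpa [mix, h] using hA i j

lemma mix_insert {n : ℕ} (A B : Matrix (Fin n) (Fin n) ℝ) (p : Fin n × Fin n)
    (s : Finset (Fin n × Fin n)) :
    mix A B (insert p s) = upd (mix A B s) p.1 p.2 (B p.1 p.2) := by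
  funext i j
  by_cases h : i = p.1 ∧ j = p.2
  · obtain ⟨h1, h2⟩ := h
    subst h1; subst h2
    simp [mix, upd, Finset.mem_insert]
  · have hne : (i, j) ≠ p := by
      intro hh
      exact h ⟨congrArg Prod.fst hh, congrArg Prod.snd hh⟩
    simp [mix, upd, Finset.mem_insert, hne, h]

lemma telescope {n : ℕ} {lam : ℝ} (hlam : 1 < lam) (A B : Matrix (Fin n) (Fin n) ℝ)
    (hA : ∀ i j, lam⁻¹ ≤ A i j ∧ A i j ≤ lam)
    (hB : ∀ i j, lam⁻¹ ≤ B i j ∧ B i j ≤ lam) (s : Finset (Fin n × Fin n)) :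
    |Real.log (perm (mix A B s)) - Real.log (perm A)| ≤
      lam ^ 3 / n * ∑ p ∈ s, |B p.1 p.2 - A p.1 p.2| := by
  classical
  induction s using Finset.induction_on with
  | empty =>
    have : mix A B ∅ = A := by funext i j; simp [mix]
    simp [this]
  | @insert p s hp ih =>
    rw [Finset.sum_insert hp, mix_insert]
    have hmixA : mix A B s p.1 p.2 = A p.1 p.2 := by simp [mix, hp]
    have hstep := step hlam (mix A B s) (mix_bounds hA hB s) p.1 p.2 (B p.1 p.2) (hB p.1 p.2)
    rw [hmixA] at hstep
    calc |Real.log (perm (upd (mix A B s) p.1 p.2 (B p.1 p.2))) - Real.log (perm A)|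
        ≤ |Real.log (perm (upd (mix A B s) p.1 p.2 (B p.1 p.2))) - Real.log (perm (mix A B s))|
          + |Real.log (perm (mix A B s)) - Real.log (perm A)| := abs_sub_le _ _ _
      _ ≤ lam ^ 3 / n * |B p.1 p.2 - A p.1 p.2| + lam ^ 3 / n * ∑ p ∈ s, |B p.1 p.2 - A p.1 p.2| :=
          add_le_add hstep ih
      _ = lam ^ 3 / n * (|B p.1 p.2 - A p.1 p.2| + ∑ p ∈ s, |B p.1 p.2 - A p.1 p.2|) := by ring

lemma main_bound {n : ℕ} {lam : ℝ} (hlam : 1 < lam) (A B : Matrix (Fin n) (Fin n) ℝ)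
    (hA : ∀ i j, lam⁻¹ ≤ A i j ∧ A i j ≤ lam)
    (hB : ∀ i j, lam⁻¹ ≤ B i j ∧ B i j ≤ lam) :
    |Real.log (perm B / perm A)| ≤ lam ^ 3 / n * ∑ i, ∑ j, |B i j - A i j| := by
  have hlam0 : (0:ℝ) < lam := lt_trans one_pos hlam
  have hinv : (0:ℝ) < lam⁻¹ := inv_pos.mpr hlam0
  have hPA : 0 < perm A := perm_pos fun r c => lt_of_lt_of_le hinv (hA r c).1
  have hPB : 0 < perm B := perm_pos fun r c => lt_of_lt_of_le hinv (hB r c).1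
  have hmix : mix A B Finset.univ = B := by funext i j; simp [mix]
  have := telescope hlam A B hA hB Finset.univ
  rw [hmix] at this
  rw [Real.log_div hPB.ne' hPA.ne']
  calc |Real.log (perm B) - Real.log (perm A)|
      ≤ lam ^ 3 / n * ∑ p : Fin n × Fin n, |B p.1 p.2 - A p.1 p.2| := this
    _ = lam ^ 3 / n * ∑ i, ∑ j, |B i j - A i j| := by rw [Fintype.sum_prod_type]

/-- Regularity estimate for the permanent: if all entries of the `n × n`
matrices `A` and `B` lie in `[λ⁻¹, λ]`, then
`|log(per B / per A)| ≤ λ⁴·n·∑|bᵢⱼ−aᵢⱼ| / min(∑aᵢⱼ, ∑bᵢⱼ) ≤ (λ⁵/n)·∑|bᵢⱼ−aᵢⱼ|`. -/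
theorem stmt_13 {n : ℕ} (lam : ℝ) (hlam : 1 < lam)
    (A B : Matrix (Fin n) (Fin n) ℝ)
    (hA : ∀ i j, lam⁻¹ ≤ A i j ∧ A i j ≤ lam)
    (hB : ∀ i j, lam⁻¹ ≤ B i j ∧ B i j ≤ lam) :
    |Real.log (perm B / perm A)| ≤
        lam ^ 4 * n * (∑ i, ∑ j, |B i j - A i j|) /
          min (∑ i, ∑ j, A i j) (∑ i, ∑ j, B i j) ∧
    lam ^ 4 * n * (∑ i, ∑ j, |B i j - A i j|) /
          min (∑ i, ∑ j, A i j) (∑ i, ∑ j, B i j) ≤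
        lam ^ 5 / n * ∑ i, ∑ j, |B i j - A i j| := by
  have hlam0 : (0:ℝ) < lam := lt_trans one_pos hlam
  have hinv : (0:ℝ) < lam⁻¹ := inv_pos.mpr hlam0
  rcases Nat.eq_zero_or_pos n with rfl | hn
  · have hA1 : perm A = 1 := by simp [perm]
    have hB1 : perm B = 1 := by simp [perm]
    simp [hA1, hB1]
  · have hn' : (0:ℝ) < n := Nat.cast_pos.mpr hn
    set Δ := ∑ i, ∑ j, |B i j - A i j| with hΔ
    set SA := ∑ i, ∑ j, A i j with hSA
    set SB := ∑ i, ∑ j, B i j with hSB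
    have hΔ0 : 0 ≤ Δ := Finset.sum_nonneg fun i _ =>
      Finset.sum_nonneg fun j _ => abs_nonneg _
    have hlb : ∀ (M : Matrix (Fin n) (Fin n) ℝ), (∀ i j, lam⁻¹ ≤ M i j ∧ M i j ≤ lam) →
        (n:ℝ) * (n:ℝ) * lam⁻¹ ≤ ∑ i, ∑ j, M i j ∧ ∑ i, ∑ j, M i j ≤ (n:ℝ) * (n:ℝ) * lam := by
      intro M hM
      constructor
      · calc (n:ℝ) * (n:ℝ) * lam⁻¹ = ∑ _i : Fin n, ∑ _j : Fin n, lam⁻¹ := by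
              simp [Finset.sum_const, Finset.card_univ, mul_assoc]
          _ ≤ ∑ i, ∑ j, M i j := Finset.sum_le_sum fun i _ =>
              Finset.sum_le_sum fun j _ => (hM i j).1
      · calc ∑ i, ∑ j, M i j ≤ ∑ _i : Fin n, ∑ _j : Fin n, lam := Finset.sum_le_sum fun i _ =>
              Finset.sum_le_sum fun j _ => (hM i j).2
          _ = (n:ℝ) * (n:ℝ) * lam := by simp [Finset.sum_const, Finset.card_univ, mul_assoc]
    have hS_lb : (n:ℝ) * (n:ℝ) * lam⁻¹ ≤ min SA SB :=
      le_min (hlb A hA).1 (hlb B hB).1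
    have hS_pos : 0 < min SA SB := lt_of_lt_of_le (by positivity) hS_lb
    have hS_ub : min SA SB ≤ (n:ℝ) * (n:ℝ) * lam :=
      le_trans (min_le_left _ _) (hlb A hA).2
    have hmain := main_bound hlam A B hA hB
    constructor
    · refine le_trans hmain ?_
      rw [div_mul_eq_mul_div, div_le_div_iff₀ hn' hS_pos]
      nlinarith [mul_nonneg (mul_nonneg (pow_pos hlam0 3).le hΔ0) (sub_nonneg.mpr hS_ub)]
    · rw [div_mul_eq_mul_div, div_le_div_iff₀ hS_pos hn']
      have hlamS : (n:ℝ) * (n:ℝ) ≤ lam * min SA SB := by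
        have h1 : lam * ((n:ℝ) * (n:ℝ) * lam⁻¹) ≤ lam * min SA SB :=
          mul_le_mul_of_nonneg_left hS_lb hlam0.le
        have h2 : lam * ((n:ℝ) * (n:ℝ) * lam⁻¹) = (n:ℝ) * (n:ℝ) := by
          field_simp
        linarith
      nlinarith [mul_nonneg (mul_nonneg (pow_pos hlam0 4).le hΔ0)
        (sub_nonneg.mpr hlamS)]
end
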